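/- Let Ā ∈ M_{r×(n+1)}(ℤ) and let V ∈ M_{n+1}(ℤ) be unimodular with ĀV = [I_r | 0]; write V = [V_𝔞 | V_𝔟] (first r and last n+1−r columns) and W = V⁻¹ = [W_𝔞 ; W_𝔟] (first r and last n+1−r rows). Let F̄ = (F̄_0, F̄_1,…,F̄_n) with F̄_0 ≡ 1 and each F̄_i a T_Ā-invariant rational function of (z_0,…,z_n). Let I be an open interval with 0 ∉ I and let z : I → (ℝ∖{0})^n be differentiable with dz_i/dt = (z_i(t)/t)·F̄_i(t, z(t)) for all t ∈ I and i ≥ 1. Set z̄(t) := (t, z(t)), x(t) := z̄(t)^{V_𝔞} ∈ (ℝ∖{0})^r, and y(t) := z̄(t)^{V_𝔟} ∈ (ℝ∖{0})^{n+1−r}. Then for all t ∈ I: dy_j/dt = (y_j(t)/t)·Σ_{i=0}^{n} F̄_i(y(t)^{W_𝔟})·(V_𝔟)_{i,j} for every j, and dx_k/dt = (x_k(t)/t)·Σ_{i=0}^{n} F̄_i(y(t)^{W_𝔟})·(V_𝔞)_{i,k} for every k. -/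

import Mathlib

/-- For a vector `x` of real numbers and an integer matrix `A`, `mpow x A` is the vector
whose `j`-th entry is `∏ i, x i ^ A i j` (integer powers). -/
noncomputable def mpow {ι κ : Type*} [Fintype ι] (x : ι → ℝ) (A : Matrix ι κ ℤ) : κ → ℝ :=
  fun j => ∏ i, x i ^ A i j

lemma zpow_fsum {α : Type*} {x : ℝ} (hx : x ≠ 0) (s : Finset α) (f : α → ℤ) :
    x ^ (∑ i ∈ s, f i) = ∏ i ∈ s, x ^ f i := by
  classical
  induction s using Finset.cons_induction with
  | empty => simp
  | cons a s ha ih => rw [Finset.sum_cons, Finset.prod_cons, zpow_add₀ hx, ih]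

lemma mpow_ne_zero {ι κ : Type*} [Fintype ι] {x : ι → ℝ} (hx : ∀ i, x i ≠ 0)
    (A : Matrix ι κ ℤ) (j : κ) : mpow x A j ≠ 0 :=
  Finset.prod_ne_zero_iff.mpr fun i _ => zpow_ne_zero _ (hx i)

lemma mpow_matmul {ι κ μ : Type*} [Fintype ι] [Fintype κ] {x : ι → ℝ}
    (hx : ∀ i, x i ≠ 0) (A : Matrix ι κ ℤ) (B : Matrix κ μ ℤ) :
    mpow x (A * B) = mpow (mpow x A) B := by
  funext j
  unfold mpow
  simp only [Matrix.mul_apply]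
  calc ∏ i, x i ^ (∑ k, A i k * B k j)
      = ∏ i, ∏ k, (x i ^ A i k) ^ B k j := by
        refine Finset.prod_congr rfl fun i _ => ?_
        rw [zpow_fsum (hx i)]
        exact Finset.prod_congr rfl fun k _ => zpow_mul _ _ _
    _ = ∏ k, (∏ i, x i ^ A i k) ^ B k j := by
        rw [Finset.prod_comm]
        exact Finset.prod_congr rfl fun k _ => Finset.prod_zpow _ _ _

lemma mpow_one_mat {ι : Type*} [Fintype ι] [DecidableEq ι] (x : ι → ℝ) :
    mpow x (1 : Matrix ι ι ℤ) = x := by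
  funext j
  unfold mpow
  rw [Finset.prod_eq_single j (fun i _ hij => by simp [Matrix.one_apply_ne hij])
    (by simp)]
  simp [Matrix.one_apply_eq]

/-- Hubert–Labahn, Theorem 6.5(1).  Let `Ā ∈ M_{r×(n+1)}(ℤ)` and let `V`
be unimodular with `ĀV = [I_r | 0]`, `V = [V_𝔞 | V_𝔟]`, `W = V⁻¹ = [W_𝔞 ; W_𝔟]`.  If
`F̄ = (1, F₁, …, F_n)` consists of `T_Ā`-invariant functions and `z` solves
`dz_i/dt = (z_i/t)·F̄_i(t, z(t))` with nonvanishing components, then with `z̄ = (t, z)`,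
`x = z̄^{V_𝔞}`, `y = z̄^{V_𝔟}` one has
`dy_j/dt = (y_j/t)·Σ_i F̄_i(y^{W_𝔟})·(V_𝔟)_{i,j}` and
`dx_k/dt = (x_k/t)·Σ_i F̄_i(y^{W_𝔟})·(V_𝔞)_{i,k}`. -/
theorem reduced_system_solves (n r p : ℕ) (hn : n + 1 = r + p)
    (Abar : Matrix (Fin r) (Fin (n + 1)) ℤ)
    (V : Matrix (Fin (n + 1)) (Fin r ⊕ Fin p) ℤ)
    (W : Matrix (Fin r ⊕ Fin p) (Fin (n + 1)) ℤ)
    (hVW : V * W = 1) (hWV : W * V = 1)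
    (hAV : Abar * V = Matrix.fromCols 1 0)
    (F : Fin n → (Fin (n + 1) → ℝ) → ℝ)
    (hinv : ∀ (i : Fin n) (lam : Fin r → ℝ), (∀ k, lam k ≠ 0) →
      ∀ zz : Fin (n + 1) → ℝ, (∀ l, zz l ≠ 0) →
        F i (fun l => mpow lam Abar l * zz l) = F i zz)
    (I : Set ℝ) (hIopen : IsOpen I) (hIconv : Convex ℝ I) (h0I : (0 : ℝ) ∉ I)
    (z : ℝ → Fin n → ℝ) (hznz : ∀ t ∈ I, ∀ i, z t i ≠ 0)
    (hode : ∀ t ∈ I, ∀ i, HasDerivAt (fun s => z s i)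
        ((z t i / t) * F i (Fin.cons t (z t))) t) :
    ∀ t ∈ I,
      (∀ j : Fin p,
        HasDerivAt
          (fun s => mpow (Fin.cons s (z s) : Fin (n + 1) → ℝ) (V.submatrix id Sum.inr) j)
          ((mpow (Fin.cons t (z t) : Fin (n + 1) → ℝ) (V.submatrix id Sum.inr) j / t) *
            ∑ i : Fin (n + 1),
              (Fin.cons (fun _ => (1 : ℝ)) F : Fin (n + 1) → (Fin (n + 1) → ℝ) → ℝ) i
                  (mpow (mpow (Fin.cons t (z t) : Fin (n + 1) → ℝ)
                      (V.submatrix id Sum.inr)) (W.submatrix Sum.inr id)) *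
                (V i (Sum.inr j) : ℝ)) t) ∧
      (∀ k : Fin r,
        HasDerivAt
          (fun s => mpow (Fin.cons s (z s) : Fin (n + 1) → ℝ) (V.submatrix id Sum.inl) k)
          ((mpow (Fin.cons t (z t) : Fin (n + 1) → ℝ) (V.submatrix id Sum.inl) k / t) *
            ∑ i : Fin (n + 1),
              (Fin.cons (fun _ => (1 : ℝ)) F : Fin (n + 1) → (Fin (n + 1) → ℝ) → ℝ) i
                  (mpow (mpow (Fin.cons t (z t) : Fin (n + 1) → ℝ)
                      (V.submatrix id Sum.inr)) (W.submatrix Sum.inr id)) *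
                (V i (Sum.inl k) : ℝ)) t) := by
  intro t htI
  classical
  set zb : Fin (n + 1) → ℝ := Fin.cons t (z t) with hzbdef
  set Fb : Fin (n + 1) → (Fin (n + 1) → ℝ) → ℝ := Fin.cons (fun _ => (1 : ℝ)) F with hFbdef
  have ht : t ≠ 0 := fun h => h0I (h ▸ htI)
  have hzb : ∀ i, zb i ≠ 0 := by
    intro i
    induction i using Fin.cases with
    | zero => simpa [hzbdef] using ht
    | succ i => simpa [hzbdef] using hznz t htI i
  -- derivative of each coordinate of z̄
  have hd : ∀ i : Fin (n + 1),
      HasDerivAt (fun s => (Fin.cons s (z s) : Fin (n + 1) → ℝ) i)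
        ((zb i / t) * Fb i zb) t := by
    intro i
    induction i using Fin.cases with
    | zero =>
        simp only [Fin.cons_zero, hzbdef, hFbdef]
        have : (t / t) * (1 : ℝ) = 1 := by rw [div_self ht, mul_one]
        rw [this]
        exact hasDerivAt_id' t
    | succ i =>
        simp only [Fin.cons_succ, hzbdef, hFbdef]
        exact hode t htI i
  -- general logarithmic-derivative computation for an integer exponent column
  have key : ∀ c : Fin (n + 1) → ℤ,
      HasDerivAt (fun s => ∏ i, (Fin.cons s (z s) : Fin (n + 1) → ℝ) i ^ c i)
        ((∏ i, zb i ^ c i) / t * ∑ i, Fb i zb * (c i : ℝ)) t := by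
    intro c
    have hterm : ∀ i : Fin (n + 1),
        HasDerivAt (fun s => (Fin.cons s (z s) : Fin (n + 1) → ℝ) i ^ c i)
          ((c i : ℝ) * zb i ^ (c i - 1) * ((zb i / t) * Fb i zb)) t :=
      fun i => (hasDerivAt_zpow (c i) (zb i) (Or.inl (hzb i))).comp
        (h := fun s => (Fin.cons s (z s) : Fin (n + 1) → ℝ) i) t (hd i)
    have h := HasDerivAt.fun_finsetProd (u := Finset.univ)
      (f := fun i s => (Fin.cons s (z s) : Fin (n + 1) → ℝ) i ^ c i)
      (f' := fun i => (c i : ℝ) * zb i ^ (c i - 1) * ((zb i / t) * Fb i zb))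
      (fun i _ => hterm i)
    convert h using 1
    · rfl
    · rfl
    rw [Finset.mul_sum]
    refine Finset.sum_congr rfl fun i _ => ?_
    have h1 : zb i ^ (c i - 1) * zb i = zb i ^ c i := by
      rw [← zpow_add_one₀ (hzb i), sub_add_cancel]
    have h2 : (∏ j ∈ Finset.univ.erase i, zb j ^ c j) * zb i ^ c i
        = ∏ j, zb j ^ c j :=
      Finset.prod_erase_mul Finset.univ (fun j => zb j ^ c j) (Finset.mem_univ i)
    rw [smul_eq_mul, ← h2, ← h1]
    ring
  -- Abar is the top block of W
  have hA : ∀ k l, Abar k l = W (Sum.inl k) l := by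
    have hA' : Abar = (Matrix.fromCols 1 0 : Matrix (Fin r) (Fin r ⊕ Fin p) ℤ) * W := by
      rw [← hAV, Matrix.mul_assoc, hVW, Matrix.mul_one]
    intro k l
    rw [hA']
    simp [Matrix.mul_apply, Fintype.sum_sum_type, Matrix.one_apply]
  -- the reconstructed variables
  set x : Fin r → ℝ := mpow zb (V.submatrix id Sum.inl) with hxdef
  set y : Fin p → ℝ := mpow zb (V.submatrix id Sum.inr) with hydef
  have hxnz : ∀ k, x k ≠ 0 := fun k => mpow_ne_zero hzb _ k
  have hynz : ∀ j, y j ≠ 0 := fun j => mpow_ne_zero hzb _ j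
  have hynz' : ∀ l, mpow y (W.submatrix Sum.inr id) l ≠ 0 :=
    fun l => mpow_ne_zero hynz _ l
  -- decomposition z̄ = x^Abar * y^{W_b}
  have hdecomp : zb = fun l => mpow x Abar l * mpow y (W.submatrix Sum.inr id) l := by
    have h1 : mpow zb (V * W) = zb := by rw [hVW, mpow_one_mat]
    funext l
    have h2 := congrFun ((mpow_matmul hzb V W).symm.trans h1) l
    rw [← h2]
    unfold mpow
    rw [Fintype.prod_sum_type]
    congr 1
    refine Finset.prod_congr rfl fun k _ => ?_
    rw [hA k l]
    rfl
  -- invariance: Fb i (z̄) = Fb i (y^{W_b})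
  have hF : ∀ i : Fin (n + 1), Fb i zb = Fb i (mpow y (W.submatrix Sum.inr id)) := by
    intro i
    induction i using Fin.cases with
    | zero => simp [hFbdef]
    | succ i =>
        simp only [hFbdef, Fin.cons_succ]
        rw [hdecomp]
        exact hinv i x hxnz _ hynz'
  constructor
  · intro j
    have h := key (fun i => V i (Sum.inr j))
    convert h using 2
    · rfl
    · rfl
    exact Finset.sum_congr rfl fun i _ => by rw [hF i]
  · intro k
    have h := key (fun i => V i (Sum.inl k))
    convert h using 2
    · rfl
    · rfl
    exact Finset.sum_congr rfl fun i _ => by rw [hF i]
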